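/- Let Δ be a compact Hausdorff space, u : Δ → ℝ continuous, v : Δ → ℝ upper semicontinuous; set f(α) = max{v(w) : w ∈ Δ, u(w) = α} (−∞ if empty) and τ(q) = min_{w∈Δ}(q·u(w) − v(w)). Define ∂⁻τ(∞) = lim_{q→∞} τ(q)/q and ∂⁺τ(−∞) = lim_{q→−∞} τ(q)/q (these limits exist and are finite). Then there exists w⁺ ∈ Δ such that q ↦ q·u(w⁺) − v(w⁺) is the affine asymptote of τ at +∞ (i.e. u(w⁺) = ∂⁻τ(∞) and τ(q) − (q·u(w⁺) − v(w⁺)) → 0 as q → ∞), and similarly at −∞. In particular, f(∂⁻τ(∞)) = τ*(∂⁻τ(∞)) and f(∂⁺τ(−∞)) = τ*(∂⁺τ(−∞)). -/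

import Mathlib

open Filter Set Topology

noncomputable section

variable {Δ : Type*} [TopologicalSpace Δ]

/-- The unconstrained dual `τ(q) = min_{w∈Δ} (q·u(w) − v(w))`. -/
def tauOpt (u v : Δ → ℝ) (q : ℝ) : ℝ :=
  sInf (Set.range fun w => q * u w - v w)

/-- The constrained optimum `f(α) = max{v(w) : u(w) = α}`, valued in `EReal`
(with value `−∞ = ⊥` if the constraint set is empty). -/
def fOpt (u v : Δ → ℝ) (α : ℝ) : EReal :=
  sSup ((fun w => ((v w : ℝ) : EReal)) '' {w | u w = α})

/-- The concave conjugate `g*(α) = inf_{q∈ℝ} (qα − g(q))`, valued in `EReal`. -/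
def concConj (g : ℝ → ℝ) (α : ℝ) : EReal :=
  ⨅ q : ℝ, ((q * α - g q : ℝ) : EReal)

/-- `τ` is supported at `(q, α)`: there is `w ∈ Δ` with `u(w) = α` and
`τ(q) = q·u(w) − v(w)`. -/
def SupportedAt (u v : Δ → ℝ) (q α : ℝ) : Prop :=
  ∃ w : Δ, u w = α ∧ tauOpt u v q = q * u w - v w

/-- `α` belongs to the subdifferential `∂τ(q)` of the concave function `τ` at `q`,
i.e. the line through `(q, τ(q))` with slope `α` lies above the graph of `τ`. -/
def InSubdiff (τ : ℝ → ℝ) (q α : ℝ) : Prop :=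
  ∀ y : ℝ, τ y ≤ τ q + α * (y - q)

section Aux

variable {Δ' : Type*} [TopologicalSpace Δ'] [CompactSpace Δ'] [Nonempty Δ']

/-- An upper semicontinuous function is bounded above on a compact space (on a closed set). -/
lemma usc_bddAbove_aux {v : Δ' → ℝ} (hv : UpperSemicontinuous v) {S : Set Δ'}
    (hScl : IsClosed S) : ∃ M : ℝ, ∀ x ∈ S, v x ≤ M := by
  by_contra h
  push_neg at h
  set K : ℕ → Set Δ' := fun n => S ∩ v ⁻¹' Ici (n : ℝ) with hK
  have hcl : ∀ n, IsClosed (K n) := fun n => hScl.inter (hv.isClosed_preimage _)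
  have hne : ∀ n, (K n).Nonempty := by
    intro n
    obtain ⟨x, hxS, hx⟩ := h (n : ℝ)
    exact ⟨x, hxS, le_of_lt hx⟩
  have hanti : ∀ {m n : ℕ}, m ≤ n → K n ⊆ K m := by
    intro m n hmn x hx
    obtain ⟨hx1, hx2⟩ := hx
    simp only [mem_preimage, mem_Ici] at hx2
    refine ⟨hx1, ?_⟩
    simp only [mem_preimage, mem_Ici]
    have h2 : (m : ℝ) ≤ (n : ℝ) := by exact_mod_cast hmn
    linarith
  obtain ⟨x, hx⟩ := IsCompact.nonempty_iInter_of_directed_nonempty_isCompact_isClosed K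
    (fun m n => ⟨max m n, hanti (le_max_left m n), hanti (le_max_right m n)⟩) hne
    (fun n => (hcl n).isCompact) hcl
  obtain ⟨n, hn⟩ := exists_nat_gt (v x)
  have h2 : (n : ℝ) ≤ v x := (mem_iInter.1 hx n).2
  linarith

/-- An upper semicontinuous function attains its maximum on a nonempty closed set
in a compact space. -/
lemma usc_exists_max_aux {v : Δ' → ℝ} (hv : UpperSemicontinuous v) {S : Set Δ'}
    (hScl : IsClosed S) (hSne : S.Nonempty) : ∃ w ∈ S, ∀ x ∈ S, v x ≤ v w := by
  obtain ⟨M, hM⟩ := usc_bddAbove_aux hv hScl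
  set M0 := sSup (v '' S) with hM0
  have hbdd : BddAbove (v '' S) := ⟨M, by rintro _ ⟨x, hx, rfl⟩; exact hM x hx⟩
  have hne' : (v '' S).Nonempty := hSne.image v
  set K : ℕ → Set Δ' := fun n => S ∩ v ⁻¹' Ici (M0 - 1 / (n + 1)) with hK
  have hcl : ∀ n, IsClosed (K n) := fun n => hScl.inter (hv.isClosed_preimage _)
  have hne : ∀ n, (K n).Nonempty := by
    intro n
    have hlt : M0 - 1 / ((n : ℝ) + 1) < M0 := by
      have : (0:ℝ) < 1 / ((n : ℝ) + 1) := by positivity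
      linarith
    obtain ⟨b, hb, hblt⟩ := exists_lt_of_lt_csSup hne' hlt
    obtain ⟨x, hxS, rfl⟩ := hb
    exact ⟨x, hxS, le_of_lt hblt⟩
  have hanti : ∀ {m n : ℕ}, m ≤ n → K n ⊆ K m := by
    intro m n hmn x hx
    refine ⟨hx.1, ?_⟩
    have h2 : (1:ℝ) / ((n:ℝ) + 1) ≤ 1 / ((m:ℝ) + 1) := by
      apply one_div_le_one_div_of_le (by positivity)
      have : (m:ℝ) ≤ (n:ℝ) := by exact_mod_cast hmn
      linarith
    have h3 : M0 - 1 / ((n:ℝ) + 1) ≤ v x := hx.2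
    simp only [mem_preimage, mem_Ici]
    linarith
  obtain ⟨x, hx⟩ := IsCompact.nonempty_iInter_of_directed_nonempty_isCompact_isClosed K
    (fun m n => ⟨max m n, hanti (le_max_left m n), hanti (le_max_right m n)⟩) hne
    (fun n => (hcl n).isCompact) hcl
  have hxS : x ∈ S := (mem_iInter.1 hx 0).1
  have hxge : ∀ n : ℕ, M0 - 1 / ((n:ℝ) + 1) ≤ v x := fun n => (mem_iInter.1 hx n).2
  have hlim : Tendsto (fun n : ℕ => M0 - 1 / ((n:ℝ) + 1)) atTop (nhds M0) := by
    have : Tendsto (fun n : ℕ => 1 / ((n : ℝ) + 1)) atTop (nhds 0) :=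
      tendsto_one_div_add_atTop_nhds_zero_nat
    have h2 : Tendsto (fun _ : ℕ => M0) atTop (nhds M0) := tendsto_const_nhds
    simpa using h2.sub this
  have hM0le : M0 ≤ v x := le_of_tendsto' hlim hxge
  refine ⟨x, hxS, fun y hy => ?_⟩
  exact le_trans (le_csSup hbdd (mem_image_of_mem v hy)) hM0le

/-- Main lemma: the `atTop` asymptote of `tauOpt` is realized by a maximizer of `v`
on the set where `u` attains its minimum. -/
lemma tauOpt_atTop_main {Δ' : Type*} [TopologicalSpace Δ'] [CompactSpace Δ'] [Nonempty Δ']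
    (u v : Δ' → ℝ) (hu : Continuous u) (hv : UpperSemicontinuous v) :
    ∃ wp : Δ', (∀ w, u wp ≤ u w) ∧
      Tendsto (fun q : ℝ => tauOpt u v q / q) atTop (nhds (u wp)) ∧
      Tendsto (fun q : ℝ => tauOpt u v q - (q * u wp - v wp)) atTop (nhds 0) ∧
      fOpt u v (u wp) = concConj (tauOpt u v) (u wp) := by
  obtain ⟨M, hM⟩ := usc_bddAbove_aux hv (isClosed_univ (X := Δ'))
  have hbdd : ∀ q : ℝ, BddBelow (Set.range fun w => q * u w - v w) := by
    intro q
    obtain ⟨wq, -, hwq⟩ := isCompact_univ.exists_isMinOn univ_nonempty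
      ((continuous_const.mul hu).continuousOn (s := univ))
    refine ⟨q * u wq - M, ?_⟩
    rintro _ ⟨w, rfl⟩
    have h1 : q * u wq ≤ q * u w := hwq (mem_univ w)
    have h2 : v w ≤ M := hM w (mem_univ w)
    simp only
    linarith
  have htle : ∀ (q : ℝ) (w : Δ'), tauOpt u v q ≤ q * u w - v w :=
    fun q w => csInf_le (hbdd q) ⟨w, rfl⟩
  have hlege : ∀ (q c : ℝ), (∀ w, c ≤ q * u w - v w) → c ≤ tauOpt u v q := by
    intro q c h
    refine le_csInf (range_nonempty _) ?_
    rintro _ ⟨w, rfl⟩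
    exact h w
  obtain ⟨w0, -, hw0⟩ := isCompact_univ.exists_isMinOn univ_nonempty hu.continuousOn
  have hScl : IsClosed (u ⁻¹' {u w0}) := isClosed_singleton.preimage hu
  obtain ⟨wp, hwpS, hwpmax⟩ := usc_exists_max_aux hv hScl ⟨w0, rfl⟩
  have hupa : u wp = u w0 := hwpS
  have humin : ∀ w, u wp ≤ u w := fun w => hupa ▸ hw0 (mem_univ w)
  have hmax' : ∀ w, u w = u wp → v w ≤ v wp := by
    intro w hw
    exact hwpmax w (by simp only [mem_preimage, mem_singleton_iff]; rw [hw, hupa])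
  set g : ℝ → ℝ := fun q => tauOpt u v q - q * u wp with hgdef
  have hgmono : Monotone g := by
    intro q q' hqq'
    have h1 : tauOpt u v q + (q' - q) * u wp ≤ tauOpt u v q' := by
      apply hlege
      intro w
      have h2 := htle q w
      have h3 : (q' - q) * u wp ≤ (q' - q) * u w :=
        mul_le_mul_of_nonneg_left (humin w) (by linarith)
      linarith
    show tauOpt u v q - q * u wp ≤ tauOpt u v q' - q' * u wp
    linarith
  have hgleV : ∀ q, g q ≤ -v wp := by
    intro q
    have := htle q wp
    simp only [hgdef]
    linarith
  have hkey : ∀ ε : ℝ, 0 < ε → ∃ N : ℝ, ∀ q ≥ N, -v wp - ε ≤ g q := by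
    intro ε hε
    set K : ℕ → Set Δ' := fun n =>
      (fun w => v w + -(n : ℝ) * (u w - u wp)) ⁻¹' Ici (v wp + ε) with hK
    have hcl : ∀ n, IsClosed (K n) := by
      intro n
      have hc : Continuous fun w : Δ' => -(n : ℝ) * (u w - u wp) :=
        continuous_const.mul (hu.sub continuous_const)
      exact (hv.add hc.upperSemicontinuous).isClosed_preimage _
    have hnotall : ¬ ∀ n, (K n).Nonempty := by
      intro hall
      have hanti : ∀ {m n : ℕ}, m ≤ n → K n ⊆ K m := by
        intro m n hmn x hx
        simp only [hK, mem_preimage, mem_Ici] at hx ⊢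
        have hmn' : (m : ℝ) ≤ (n : ℝ) := by exact_mod_cast hmn
        nlinarith [humin x]
      obtain ⟨x, hx⟩ := IsCompact.nonempty_iInter_of_directed_nonempty_isCompact_isClosed K
        (fun m n => ⟨max m n, hanti (le_max_left m n), hanti (le_max_right m n)⟩) hall
        (fun n => (hcl n).isCompact) hcl
      have hxn : ∀ n : ℕ, (n : ℝ) * (u x - u wp) ≤ v x - (v wp + ε) := by
        intro n
        have := mem_iInter.1 hx n
        simp only [hK, mem_preimage, mem_Ici] at this
        linarith
      have hua : u x = u wp := by
        by_contra hne
        have hpos : 0 < u x - u wp :=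
          lt_of_le_of_ne (by linarith [humin x]) (by intro h; exact hne (by linarith))
        obtain ⟨n, hn⟩ := exists_nat_gt ((v x - (v wp + ε)) / (u x - u wp))
        have h2 : v x - (v wp + ε) < (n : ℝ) * (u x - u wp) := by
          rw [div_lt_iff₀ hpos] at hn
          linarith
        linarith [hxn n]
      have h3 := hmax' x hua
      have h4 := hxn 0
      simp only [Nat.cast_zero, zero_mul] at h4
      linarith
    push_neg at hnotall
    obtain ⟨n, hn⟩ := hnotall
    refine ⟨(n : ℝ), fun q hq => ?_⟩
    have hgn : -v wp - ε ≤ g (n : ℝ) := by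
      have hall : ∀ w, (n : ℝ) * u wp + (-v wp - ε) ≤ (n : ℝ) * u w - v w := by
        intro w
        by_contra hcon
        push_neg at hcon
        have hwK : w ∈ K n := by simp only [hK, mem_preimage, mem_Ici]; nlinarith
        rw [hn] at hwK
        simpa using hwK
      have := hlege (n : ℝ) _ hall
      simp only [hgdef]
      linarith
    exact le_trans hgn (hgmono hq)
  have hbddg : BddAbove (Set.range g) := ⟨-v wp, by rintro _ ⟨q, rfl⟩; exact hgleV q⟩
  have hsup : (⨆ q, g q) = -v wp := by
    apply le_antisymm (ciSup_le hgleV)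
    refine le_of_forall_pos_le_add fun ε hε => ?_
    obtain ⟨N, hN⟩ := hkey ε hε
    have h1 : -v wp - ε ≤ g N := hN N le_rfl
    have h2 : g N ≤ ⨆ q, g q := le_ciSup hbddg N
    linarith
  have htendg : Tendsto g atTop (nhds (-v wp)) := hsup ▸ tendsto_atTop_ciSup hgmono hbddg
  have hb2 : Tendsto (fun q : ℝ => tauOpt u v q - (q * u wp - v wp)) atTop (nhds 0) := by
    have h1 := htendg.add_const (v wp)
    rw [neg_add_cancel] at h1
    refine h1.congr fun q => ?_
    have hgq : g q = tauOpt u v q - q * u wp := rfl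
    linarith
  have hb1 : Tendsto (fun q : ℝ => tauOpt u v q / q) atTop (nhds (u wp)) := by
    have h0 : Tendsto (fun q : ℝ => g q / q) atTop (nhds 0) := htendg.div_atTop tendsto_id
    have h1 := h0.add_const (u wp)
    rw [zero_add] at h1
    refine h1.congr' ?_
    filter_upwards [eventually_gt_atTop (0 : ℝ)] with q hq
    have hgq : g q = tauOpt u v q - q * u wp := rfl
    rw [hgq]
    field_simp
    ring
  have hfopt : fOpt u v (u wp) = ((v wp : ℝ) : EReal) := by
    apply le_antisymm
    · apply sSup_le
      rintro x ⟨w, hw, rfl⟩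
      exact EReal.coe_le_coe_iff.2 (hmax' w hw)
    · exact le_sSup ⟨wp, rfl, rfl⟩
  have hconc : concConj (tauOpt u v) (u wp) = ((v wp : ℝ) : EReal) := by
    have hanti : Antitone fun q : ℝ => ((q * u wp - tauOpt u v q : ℝ) : EReal) := by
      intro q q' hqq'
      apply EReal.coe_le_coe_iff.2
      have := hgmono hqq'
      simp only [hgdef] at this
      linarith
    have h1 : Tendsto (fun q : ℝ => ((q * u wp - tauOpt u v q : ℝ) : EReal)) atTop
        (nhds ((v wp : ℝ) : EReal)) := by
      rw [EReal.tendsto_coe]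
      have h2 := htendg.neg
      rw [neg_neg] at h2
      refine h2.congr fun q => ?_
      have hgq : g q = tauOpt u v q - q * u wp := rfl
      linarith
    exact (tendsto_nhds_unique (tendsto_atTop_iInf hanti) h1 : _)
  exact ⟨wp, humin, hb1, hb2, hfopt.trans hconc.symm⟩

end Aux

theorem stmt_12 {Δ : Type*} [TopologicalSpace Δ] [CompactSpace Δ] [T2Space Δ] [Nonempty Δ]
    (u v : Δ → ℝ) (hu : Continuous u) (hv : UpperSemicontinuous v) :
    (∃ wp : Δ,
      Tendsto (fun q : ℝ => tauOpt u v q / q) atTop (nhds (u wp)) ∧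
      Tendsto (fun q : ℝ => tauOpt u v q - (q * u wp - v wp)) atTop (nhds 0) ∧
      fOpt u v (u wp) = concConj (tauOpt u v) (u wp)) ∧
    (∃ wm : Δ,
      Tendsto (fun q : ℝ => tauOpt u v q / q) atBot (nhds (u wm)) ∧
      Tendsto (fun q : ℝ => tauOpt u v q - (q * u wm - v wm)) atBot (nhds 0) ∧
      fOpt u v (u wm) = concConj (tauOpt u v) (u wm)) := by
  constructor
  · obtain ⟨wp, -, h1, h2, h3⟩ := tauOpt_atTop_main u v hu hv
    exact ⟨wp, h1, h2, h3⟩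
  · obtain ⟨wm, -, h1, h2, h3⟩ := tauOpt_atTop_main (fun w => -u w) v hu.neg hv
    have htaueq : ∀ q : ℝ, tauOpt u v q = tauOpt (fun w => -u w) v (-q) := by
      intro q
      simp only [tauOpt]
      exact congrArg sInf (congrArg Set.range (funext fun w =>
        show q * u w - v w = -q * -u w - v w by ring))
    refine ⟨wm, ?_, ?_, ?_⟩
    · have hc := (h1.comp tendsto_neg_atBot_atTop).neg
      rw [neg_neg] at hc
      refine hc.congr fun q => ?_
      simp only [Function.comp]
      rw [← htaueq q, div_neg, neg_neg]
    · have hc := h2.comp tendsto_neg_atBot_atTop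
      refine hc.congr fun q => ?_
      simp only [Function.comp]
      rw [← htaueq q]
      ring
    · have hfeq : fOpt u v (u wm) = fOpt (fun w => -u w) v (-u wm) := by
        have hset : {w : Δ | -u w = -u wm} = {w : Δ | u w = u wm} := by
          ext w; simp
        simp only [fOpt, hset]
      have hceq : concConj (tauOpt u v) (u wm) =
          concConj (tauOpt (fun w => -u w) v) (-u wm) := by
        simp only [concConj]
        rw [← (Equiv.neg ℝ).iInf_comp
          (g := fun q : ℝ => ((q * u wm - tauOpt u v q : ℝ) : EReal))]
        refine iInf_congr fun q => ?_
        have h4 : ((Equiv.neg ℝ) q * u wm - tauOpt u v ((Equiv.neg ℝ) q) : ℝ)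
            = (q * -u wm - tauOpt (fun w => -u w) v q : ℝ) := by
          simp only [Equiv.neg_apply]
          rw [htaueq (-q), neg_neg]
          ring
        rw [h4]
      rw [hfeq, hceq]
      exact h3
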